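/- Let M be a metric space with base point 0 and let (m_{u_iv_i})_{i∈ℕ} be a sequence of molecules in F(M) such that at least one of the sequences (u_i) and (v_i) is unbounded in M. Then, viewing each m_{u_iv_i} as an element of Lip_0(M)*, one has limsup_{i→∞} ‖F + m_{u_iv_i}‖ = 2 for every F in the unit sphere of the dual space Lip_0(M)*. -/

import Mathlib

open Metric Set Filter NNReal

noncomputable section

namespace NormedSpace

/-- The topological dual of a seminormed space `E`, as in the older Mathlib
(removed since; its topology comes from the norm of `E`). -/
abbrev Dual (𝕜 : Type*) [RCLike 𝕜] (E : Type*) [SeminormedAddCommGroup E] [NormedSpace 𝕜 E] :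
    Type _ :=
  E →L[𝕜] 𝕜

end NormedSpace

namespace DeltaPaper

/-! ### Generic Banach space notions -/

variable {X : Type*} [NormedAddCommGroup X] [NormedSpace ℝ X]

/-- `x` is a Daugavet-point: every slice of the unit ball contains, for every `ε > 0`,
an element at distance at least `2 - ε` from `x`. -/
def IsDaugavetPoint (x : X) : Prop :=
  ∀ (φ : NormedSpace.Dual ℝ X) (α : ℝ), ‖φ‖ = 1 → 0 < α → ∀ ε > 0,
    ∃ y : X, ‖y‖ ≤ 1 ∧ 1 - α < φ y ∧ 2 - ε ≤ ‖x - y‖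

/-- `x` is a Δ-point: every slice of the unit ball containing `x` contains, for every
`ε > 0`, an element at distance at least `2 - ε` from `x`. -/
def IsDeltaPoint (x : X) : Prop :=
  ∀ (φ : NormedSpace.Dual ℝ X) (α : ℝ), ‖φ‖ = 1 → 0 < α → 1 - α < φ x → ∀ ε > 0,
    ∃ y : X, ‖y‖ ≤ 1 ∧ 1 - α < φ y ∧ 2 - ε ≤ ‖x - y‖

/-- `x*` is a w*-Daugavet-point of the dual of `X`. -/
def IsWeakStarDaugavetPoint (f : NormedSpace.Dual ℝ X) : Prop :=
  ∀ (x : X) (α : ℝ), ‖x‖ = 1 → 0 < α → ∀ ε > 0,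
    ∃ g : NormedSpace.Dual ℝ X, ‖g‖ ≤ 1 ∧ 1 - α < g x ∧ 2 - ε ≤ ‖f - g‖

/-- `x*` is a w*-Δ-point of the dual of `X`. -/
def IsWeakStarDeltaPoint (f : NormedSpace.Dual ℝ X) : Prop :=
  ∀ (x : X) (α : ℝ), ‖x‖ = 1 → 0 < α → 1 - α < f x → ∀ ε > 0,
    ∃ g : NormedSpace.Dual ℝ X, ‖g‖ ≤ 1 ∧ 1 - α < g x ∧ 2 - ε ≤ ‖f - g‖

/-- `x` is a denting point of the unit ball: it lies in slices of the unit ball of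
arbitrarily small diameter. -/
def IsDentingPoint (x : X) : Prop :=
  ‖x‖ ≤ 1 ∧ ∀ ε > 0, ∃ (φ : NormedSpace.Dual ℝ X) (α : ℝ), ‖φ‖ = 1 ∧ 0 < α ∧
    1 - α < φ x ∧ Metric.diam {y : X | ‖y‖ ≤ 1 ∧ 1 - α < φ y} < ε

/-- The Kuratowski measure of non-compactness of a set: the infimum of all `ε > 0`
such that the set can be covered by finitely many sets of diameter less than `ε`. -/
def kuratowski {Y : Type*} [PseudoMetricSpace Y] (A : Set Y) : ℝ :=
  sInf {ε : ℝ | 0 < ε ∧ ∃ 𝒞 : Finset (Set Y), (A ⊆ ⋃ B ∈ 𝒞, B) ∧ ∀ B ∈ 𝒞, Metric.diam B < ε}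

/-! ### The space of Lipschitz functions vanishing at a base point -/

variable {M : Type*} [PseudoMetricSpace M]

/-- The least Lipschitz constant of a function. -/
def lipConst (f : M → ℝ) : ℝ≥0 := sInf {K | LipschitzWith K f}

theorem lipschitzWith_lipConst {f : M → ℝ} (hf : ∃ K, LipschitzWith K f) :
    LipschitzWith (lipConst f) f := by
  obtain ⟨K₀, hK₀⟩ := hf
  rw [lipschitzWith_iff_dist_le_mul]
  intro x y
  rcases le_or_gt (dist x y) 0 with h | h
  · have h0 : dist x y = 0 := le_antisymm h dist_nonneg
    have := hK₀.dist_le_mul x y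
    rw [h0, mul_zero] at this ⊢
    exact this
  · rw [← div_le_iff₀ h]
    have hnn : 0 ≤ dist (f x) (f y) / dist x y := by positivity
    rw [← Real.coe_toNNReal _ hnn, NNReal.coe_le_coe]
    refine le_csInf ⟨K₀, hK₀⟩ ?_
    intro K hK
    rw [← NNReal.coe_le_coe, Real.coe_toNNReal _ hnn, div_le_iff₀ h]
    exact hK.dist_le_mul x y

theorem lipConst_le {f : M → ℝ} {K : ℝ≥0} (hK : LipschitzWith K f) : lipConst f ≤ K :=
  csInf_le (OrderBot.bddBelow _) hK

theorem lipschitzWith_smul {f : M → ℝ} {K : ℝ≥0} (hK : LipschitzWith K f) (c : ℝ) :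
    LipschitzWith (‖c‖₊ * K) (c • f) := by
  rw [lipschitzWith_iff_dist_le_mul] at *
  intro x y
  have : dist ((c • f) x) ((c • f) y) = ‖c‖ * dist (f x) (f y) := by
    simp only [Pi.smul_apply, smul_eq_mul, Real.dist_eq, ← mul_sub, abs_mul, Real.norm_eq_abs]
  rw [this, NNReal.coe_mul, coe_nnnorm, mul_assoc]
  exact mul_le_mul_of_nonneg_left (hK x y) (norm_nonneg c)

variable (M) in
/-- The submodule of `M → ℝ` consisting of Lipschitz functions vanishing at the
base point `z`. -/
def Lip0 (z : M) : Submodule ℝ (M → ℝ) where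
  carrier := {f | (∃ K, LipschitzWith K f) ∧ f z = 0}
  add_mem' := by
    rintro f g ⟨⟨K, hK⟩, hf0⟩ ⟨⟨L, hL⟩, hg0⟩
    exact ⟨⟨K + L, hK.add hL⟩, by simp [hf0, hg0]⟩
  zero_mem' := ⟨⟨0, LipschitzWith.const' 0⟩, rfl⟩
  smul_mem' := by
    rintro c f ⟨⟨K, hK⟩, hf0⟩
    exact ⟨⟨‖c‖₊ * K, lipschitzWith_smul hK c⟩, by simp [hf0]⟩

variable {z : M}

instance : NormedAddCommGroup ↥(Lip0 M z) :=
  AddGroupNorm.toNormedAddCommGroup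
    { toFun := fun f => ((lipConst (f : M → ℝ) : ℝ≥0) : ℝ)
      map_zero' := by
        have h0 : lipConst (0 : M → ℝ) = 0 :=
          le_antisymm (lipConst_le (by simpa using LipschitzWith.const' (0 : ℝ))) bot_le
        show ((lipConst ((0 : ↥(Lip0 M z)) : M → ℝ) : ℝ≥0) : ℝ) = 0
        rw [show ((0 : ↥(Lip0 M z)) : M → ℝ) = 0 from rfl, h0, NNReal.coe_zero]
      add_le' := by
        intro f g
        have hf := lipschitzWith_lipConst f.2.1
        have hg := lipschitzWith_lipConst g.2.1
        have : lipConst ((f + g : ↥(Lip0 M z)) : M → ℝ) ≤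
            lipConst (f : M → ℝ) + lipConst (g : M → ℝ) := by
          refine lipConst_le ?_
          have := hf.add hg
          exact this
        exact_mod_cast this
      neg' := by
        intro f
        show ((lipConst ((-f : ↥(Lip0 M z)) : M → ℝ) : ℝ≥0) : ℝ) = _
        rw [show ((-f : ↥(Lip0 M z)) : M → ℝ) = -(f : M → ℝ) from rfl]
        unfold lipConst
        congr 2
        ext K
        exact ⟨fun hK => by simpa using hK.neg, fun hK => hK.neg⟩
      eq_zero_of_map_eq_zero' := by
        intro f hf
        replace hf : ((lipConst (f : M → ℝ) : ℝ≥0) : ℝ) = 0 := hf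
        have h0 : lipConst (f : M → ℝ) = 0 := by exact_mod_cast hf
        have hl : LipschitzWith 0 (f : M → ℝ) := h0 ▸ lipschitzWith_lipConst f.2.1
        ext x
        have := hl.dist_le_mul x z
        simp only [NNReal.coe_zero, zero_mul] at this
        have hxz : (f : M → ℝ) x = (f : M → ℝ) z :=
          dist_le_zero.mp this
        simpa [f.2.2] using hxz }

theorem Lip0.norm_def (f : ↥(Lip0 M z)) : ‖f‖ = ((lipConst (f : M → ℝ) : ℝ≥0) : ℝ) := rfl

theorem Lip0.lipschitzWith (f : ↥(Lip0 M z)) : LipschitzWith (lipConst (f : M → ℝ)) (f : M → ℝ) :=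
  lipschitzWith_lipConst f.2.1

instance : NormedSpace ℝ ↥(Lip0 M z) where
  norm_smul_le c f := by
    have : lipConst ((c • f : ↥(Lip0 M z)) : M → ℝ) ≤ ‖c‖₊ * lipConst (f : M → ℝ) :=
      lipConst_le (lipschitzWith_smul (Lip0.lipschitzWith f) c)
    calc ‖c • f‖ = ((lipConst ((c • f : ↥(Lip0 M z)) : M → ℝ) : ℝ≥0) : ℝ) := rfl
      _ ≤ ((‖c‖₊ * lipConst (f : M → ℝ) : ℝ≥0) : ℝ) := by exact_mod_cast this
      _ = ‖c‖ * ‖f‖ := by push_cast [Lip0.norm_def]; rfl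

variable (M z) in
/-- The evaluation functional `δ_x ∈ Lip₀(M)*`. -/
def evalδ (x : M) : NormedSpace.Dual ℝ ↥(Lip0 M z) :=
  LinearMap.mkContinuous
    { toFun := fun f => (f : M → ℝ) x
      map_add' := fun f g => rfl
      map_smul' := fun c f => rfl }
    (dist x z)
    (by
      intro f
      have := (Lip0.lipschitzWith f).dist_le_mul x z
      simp only [f.2.2, Real.dist_eq, sub_zero] at this
      calc ‖(f : M → ℝ) x‖ = |(f : M → ℝ) x - 0| := by simp
        _ ≤ (lipConst (f : M → ℝ) : ℝ) * dist x z := by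
            simpa [f.2.2, Real.dist_eq] using (Lip0.lipschitzWith f).dist_le_mul x z
        _ = dist x z * ‖f‖ := by rw [Lip0.norm_def, mul_comm])

variable (M z) in
/-- The Lipschitz-free space over `M`: the closed linear span of the evaluation
functionals inside `Lip₀(M)*`. -/
def FreeSpace : Submodule ℝ (NormedSpace.Dual ℝ ↥(Lip0 M z)) :=
  (Submodule.span ℝ (Set.range (evalδ M z))).topologicalClosure

variable (M z) in
/-- The molecule `m_{x y} = (δ_x - δ_y)/d(x,y)` as an element of `Lip₀(M)*`. -/
def molecule (x y : M) : NormedSpace.Dual ℝ ↥(Lip0 M z) :=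
  (dist x y)⁻¹ • (evalδ M z x - evalδ M z y)

theorem molecule_mem_freeSpace (x y : M) : molecule M z x y ∈ FreeSpace M z :=
  Submodule.le_topologicalClosure _
    (Submodule.smul_mem _ _ (Submodule.sub_mem _
      (Submodule.subset_span ⟨x, rfl⟩) (Submodule.subset_span ⟨y, rfl⟩)))

variable (M z) in
/-- The molecule `m_{x y}` as an element of the free space `F(M)`. -/
def mol (x y : M) : ↥(FreeSpace M z) := ⟨molecule M z x y, molecule_mem_freeSpace x y⟩

variable (M) in
/-- A metric space is uniformly discrete if distances between distinct points are
bounded below by a positive constant. -/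
def UniformlyDiscrete : Prop := ∃ θ > (0:ℝ), ∀ x y : M, x ≠ y → θ ≤ dist x y

/-- A norm-one Lipschitz function is local if its Lipschitz constant is approximated
on pairs of arbitrarily close points. -/
def IsLocal (f : ↥(Lip0 M z)) : Prop :=
  ∀ ε > 0, ∃ u v : M, u ≠ v ∧
    ‖f‖ - ε < ((f : M → ℝ) u - (f : M → ℝ) v) / dist u v ∧ dist u v < ε

/-- `f ∈ S_{Lip₀(M)}` is a w*-Daugavet-point: for every w*-slice `S(μ, α)` of
`B_{Lip₀(M)}` (`μ` a norm-one element of `F(M)`) and every `ε > 0` there is `g` in the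
slice with `‖f - g‖ ≥ 2 - ε`. -/
def IsLipWeakStarDaugavetPoint (f : ↥(Lip0 M z)) : Prop :=
  ∀ μ : NormedSpace.Dual ℝ ↥(Lip0 M z), μ ∈ FreeSpace M z → ‖μ‖ = 1 → ∀ α > (0:ℝ), ∀ ε > (0:ℝ),
    ∃ g : ↥(Lip0 M z), ‖g‖ ≤ 1 ∧ 1 - α < μ g ∧ 2 - ε ≤ ‖f - g‖

/-- `f ∈ S_{Lip₀(M)}` is a w*-Δ-point: the same as above, but only for w*-slices
containing `f`. -/
def IsLipWeakStarDeltaPoint (f : ↥(Lip0 M z)) : Prop :=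
  ∀ μ : NormedSpace.Dual ℝ ↥(Lip0 M z), μ ∈ FreeSpace M z → ‖μ‖ = 1 → ∀ α > (0:ℝ),
    1 - α < μ f → ∀ ε > (0:ℝ),
    ∃ g : ↥(Lip0 M z), ‖g‖ ≤ 1 ∧ 1 - α < μ g ∧ 2 - ε ≤ ‖f - g‖

end DeltaPaper

open DeltaPaper NormedSpace Filter


section AuxStatement12

open NNReal Filter

variable {M : Type*} [MetricSpace M]

theorem DeltaPaperNorming {X : Type*} [NormedAddCommGroup X] [NormedSpace ℝ X]
    (F : NormedSpace.Dual ℝ X) {c : ℝ} (hc : 0 ≤ c) (h : c < ‖F‖) :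
    ∃ x : X, ‖x‖ ≤ 1 ∧ c < F x := by
  by_contra hcon
  push_neg at hcon
  have hb : ‖F‖ ≤ c := by
    refine ContinuousLinearMap.opNorm_le_bound F hc fun x => ?_
    rcases eq_or_ne x 0 with rfl | hx
    · simp
    · have hxn : 0 < ‖x‖ := norm_pos_iff.mpr hx
      have hu1 : ‖‖x‖⁻¹ • x‖ ≤ 1 := by
        rw [norm_smul, norm_inv, norm_norm, inv_mul_cancel₀ hxn.ne']
      have h1 := hcon (‖x‖⁻¹ • x) hu1
      have h2 := hcon (-(‖x‖⁻¹ • x)) (by rwa [norm_neg])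
      rw [map_smul, smul_eq_mul] at h1
      rw [map_neg, map_smul, smul_eq_mul] at h2
      have h1' := mul_le_mul_of_nonneg_left h1 hxn.le
      have h2' := mul_le_mul_of_nonneg_left h2 hxn.le
      rw [← mul_assoc, mul_inv_cancel₀ hxn.ne', one_mul] at h1'
      have h2'' : -(‖x‖ * c) ≤ F x := by
        have : ‖x‖ * -(‖x‖⁻¹ * F x) = -(F x) := by
          field_simp
        rw [this] at h2'
        linarith
      rw [Real.norm_eq_abs, abs_le]
      constructor
      · linarith [h2'']
      · linarith [h1']
  linarith


theorem DeltaPaperKey {z : M} {f : M → ℝ} (hf : LipschitzWith 1 f) (hfz : f z = 0)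
    {P δ : ℝ} (hP : 0 ≤ P) (hδ0 : 0 < δ) (hδ1 : δ ≤ 1)
    {u v : M} (huv : u ≠ v)
    (hc : 4*P + 4*P/δ + 1 ≤ max (dist u z) (dist v z)) :
    ∃ (g : M → ℝ) (Q : ℝ), P ≤ Q ∧
      LipschitzWith (1 + δ.toNNReal) g ∧ g z = 0 ∧
      (∀ x, dist x z ≤ P → g x = f x) ∧
      (∀ x, Q ≤ dist x z → g x = f x) ∧
      (1 - δ) * dist u v ≤ g u - g v := by
  have hN : Nonempty M := ⟨z⟩
  set D := dist u z with hD
  set s := dist v z with hs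
  set c := max D s with hcdef
  have hD0 : 0 ≤ D := dist_nonneg
  have hs0 : 0 ≤ s := dist_nonneg
  have hDc : D ≤ c := le_max_left _ _
  have hsc : s ≤ c := le_max_right _ _
  have hc0 : 0 < c := by
    have h1 : 0 ≤ 4*P/δ := by positivity
    calc (0:ℝ) < 4*P + 4*P/δ + 1 := by linarith
    _ ≤ c := hc
  set r := dist u v with hr
  have hr0 : 0 < r := dist_pos.mpr huv
  have hfd : ∀ x y : M, f x - f y ≤ dist x y := by
    intro x y
    have h := hf.dist_le_mul x y
    rw [NNReal.coe_one, one_mul, Real.dist_eq] at h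
    exact le_trans (le_abs_self _) h
  have hfb : ∀ x, |f x| ≤ dist x z := by
    intro x
    have h := hf.dist_le_mul x z
    rw [NNReal.coe_one, one_mul, Real.dist_eq, hfz, sub_zero] at h
    exact h
  set pen : M → ℝ := fun a => 2 * max (dist a z - P) 0 with hpen
  have hpen0 : ∀ a, 0 ≤ pen a := fun a => by positivity
  have hpenz : pen z = 0 := by
    have h : max (dist z z - P) 0 = 0 := by
      rw [dist_self]; exact max_eq_right (by linarith)
    simp only [hpen, h, mul_zero]
  have hpen_key : ∀ a, 2 * dist a z - pen a ≤ 2 * P := by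
    intro a
    have h1 : dist a z - P ≤ max (dist a z - P) 0 := le_max_left _ _
    simp only [hpen]; linarith
  set α := ⨆ a : M, (f a - dist v a - pen a) with hα
  set UU := ⨆ a : M, (-(f a) - dist u a - pen a) with hUU
  set U := -UU with hU
  have bddA : BddAbove (Set.range fun a : M => f a - dist v a - pen a) := by
    refine ⟨f v, ?_⟩
    rintro x ⟨a, rfl⟩
    have h1 : f a - f v ≤ dist a v := hfd a v
    have h2 : dist a v = dist v a := dist_comm _ _
    have h3 := hpen0 a
    simp only []
    linarith
  have bddB : BddAbove (Set.range fun a : M => -(f a) - dist u a - pen a) := by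
    refine ⟨-(f u), ?_⟩
    rintro x ⟨a, rfl⟩
    have h1 : f u - f a ≤ dist u a := hfd u a
    have h3 := hpen0 a
    simp only []
    linarith
  have hαle : α ≤ f v := by
    refine ciSup_le fun a => ?_
    have h1 : f a - f v ≤ dist a v := hfd a v
    have h2 : dist a v = dist v a := dist_comm _ _
    have h3 := hpen0 a
    linarith
  have hαge : ∀ b : M, f b - dist v b - pen b ≤ α := fun b => le_ciSup bddA b
  have hUfu : f u ≤ U := by
    have h : UU ≤ -(f u) := by
      refine ciSup_le fun a => ?_
      have h1 : f u - f a ≤ dist u a := hfd u a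
      have h3 := hpen0 a
      linarith
    rw [hU]; linarith
  have hUle : ∀ b : M, U ≤ f b + dist u b + pen b := by
    intro b
    have h := le_ciSup bddB b
    rw [hU]; linarith
  have hUD : U ≤ D := by
    have h := hUle z
    rw [hfz, hpenz] at h
    simpa using h
  have hαges : -s ≤ α := by
    have h := hαge z
    rw [hfz, hpenz] at h
    rw [hs]
    linarith
  set β := min U (α + r) with hβ
  -- key sup inequalities
  have hKey1 : α + UU ≤ 4*P - r := by
    have h : α ≤ 4*P - r - UU := by
      refine ciSup_le fun a => ?_
      have h2 : UU ≤ 4*P - r - (f a - dist v a - pen a) := by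
        refine ciSup_le fun b => ?_
        have t1 : f a - f b ≤ dist a b := hfd a b
        have t2 : r ≤ dist u b + (dist b a + dist a v) := by
          calc r ≤ dist u b + dist b v := dist_triangle _ _ _
          _ ≤ dist u b + (dist b a + dist a v) := by linarith [dist_triangle b a v]
        have t3 : dist a b ≤ dist a z + dist b z := by
          calc dist a b ≤ dist a z + dist z b := dist_triangle _ _ _
          _ = dist a z + dist b z := by rw [dist_comm z b]
        have t4 := hpen_key a
        have t5 := hpen_key b
        have t6 : dist b a = dist a b := dist_comm _ _
        have t7 : dist v a = dist a v := dist_comm _ _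
        linarith
      linarith
    linarith
  have hKey2 : α + UU ≤ 4*P - (D + s) := by
    have h : α ≤ 4*P - (D + s) - UU := by
      refine ciSup_le fun a => ?_
      have h2 : UU ≤ 4*P - (D + s) - (f a - dist v a - pen a) := by
        refine ciSup_le fun b => ?_
        have t1 : f a ≤ dist a z := le_trans (le_abs_self _) (hfb a)
        have t1' : -(f b) ≤ dist b z := by
          have := abs_le.mp (hfb b); linarith
        have t2 : D ≤ dist u b + dist b z := by
          calc D = dist u z := rfl
          _ ≤ dist u b + dist b z := dist_triangle _ _ _
        have t3 : s ≤ dist v a + dist a z := by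
          calc s = dist v z := rfl
          _ ≤ dist v a + dist a z := dist_triangle _ _ _
        have t4 := hpen_key a
        have t5 := hpen_key b
        linarith
      linarith
    linarith
  have hUα1 : r - 4*P ≤ U - α := by rw [hU]; linarith
  have hUα2 : D + s - 4*P ≤ U - α := by rw [hU]; linarith
  have hβα : (1 - δ) * r ≤ β - α := by
    rcases le_total (α + r) U with h | h
    · have hb : β = α + r := min_eq_right h
      rw [hb]
      have h1 : (1-δ) * r ≤ 1 * r := by
        apply mul_le_mul_of_nonneg_right _ hr0.le
        linarith
      linarith
    · have hb : β = U := min_eq_left h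
      rw [hb]
      have h1 : U - α ≤ r := by linarith
      have h2 : c ≤ D + s := max_le (by linarith) (by linarith)
      have h3 : 4*P/δ + 1 ≤ U - α := by linarith
      have e1 : δ * (4*P/δ + 1) ≤ δ * (U - α) := mul_le_mul_of_nonneg_left h3 hδ0.le
      have e2 : δ * (U - α) ≤ δ * r := mul_le_mul_of_nonneg_left h1 hδ0.le
      have e3 : δ * (4*P/δ + 1) = 4*P + δ := by field_simp
      nlinarith
  have hβD : β ≤ D := le_trans (min_le_left _ _) hUD
  have hβc : -c ≤ β := by
    have h1 : -c ≤ U := by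
      have := abs_le.mp (hfb u)
      have : -D ≤ f u := by linarith
      linarith [hUfu]
    have h2 : -c ≤ α + r := by linarith
    exact le_min h1 h2
  have hfub := abs_le.mp (hfb u)
  have hfvb := abs_le.mp (hfb v)
  -- Q, η
  set Q := P + c + 3*c/δ with hQ
  have h3cδ : 0 ≤ 3*c/δ := by positivity
  have hPQ : P ≤ Q := by rw [hQ]; linarith
  set η : M → ℝ := fun x => δ * max (Q - dist x z) 0 with hη
  have hη0 : ∀ x, 0 ≤ η x := fun x => by positivity
  have hδ3c : δ * (3*c/δ) = 3*c := by field_simp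
  have hηu : 2*c ≤ η u := by
    have h1 : 3*c/δ ≤ Q - dist u z := by rw [hQ]; simp only [← hD]; linarith
    have h2 : Q - dist u z ≤ max (Q - dist u z) 0 := le_max_left _ _
    have h3 := mul_le_mul_of_nonneg_left (le_trans h1 h2) hδ0.le
    rw [hδ3c] at h3
    simp only [hη]
    linarith
  have hηv : 2*c ≤ η v := by
    have h1 : 3*c/δ ≤ Q - dist v z := by rw [hQ]; simp only [← hs]; linarith
    have h2 : Q - dist v z ≤ max (Q - dist v z) 0 := le_max_left _ _
    have h3 := mul_le_mul_of_nonneg_left (le_trans h1 h2) hδ0.le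
    rw [hδ3c] at h3
    simp only [hη]
    linarith
  set g0 : M → ℝ := fun x => min (max (f x) (β - dist x u)) (α + dist x v) with hg0
  have hg0u : g0 u = β := by
    show min (max (f u) (β - dist u u)) (α + dist u v) = β
    rw [dist_self, sub_zero, ← hr]
    rcases le_total U (α + r) with h | h
    · have hb : β = U := min_eq_left h
      rw [max_eq_right (by rw [hb]; exact hUfu), min_eq_left (by rw [hb]; exact h)]
    · have hb : β = α + r := min_eq_right h
      have h2 : α + r ≤ max (f u) β := le_trans (le_of_eq hb.symm) (le_max_right _ _)
      rw [min_eq_right h2, ← hb]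
  have hg0v : g0 v = α := by
    show min (max (f v) (β - dist v u)) (α + dist v v) = α
    rw [dist_self, add_zero]
    exact min_eq_right (le_trans hαle (le_max_left _ _))
  set g : M → ℝ := fun x => max (f x - η x) (min (g0 x) (f x + η x)) with hgdef
  have hgu : g u = β := by
    show max (f u - η u) (min (g0 u) (f u + η u)) = β
    rw [hg0u]
    have h1 : β ≤ f u + η u := by linarith
    have h2 : f u - η u ≤ β := by linarith
    rw [min_eq_left h1, max_eq_right h2]
  have hgv : g v = α := by
    show max (f v - η v) (min (g0 v) (f v + η v)) = α
    rw [hg0v]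
    have h1 : α ≤ f v + η v := by linarith [hη0 v]
    have h2 : f v - η v ≤ α := by linarith
    rw [min_eq_left h1, max_eq_right h2]
  have hinner : ∀ x, dist x z ≤ P → g x = f x := by
    intro x hx
    have hpx : pen x = 0 := by
      have h : max (dist x z - P) 0 = 0 := max_eq_right (by linarith)
      simp only [hpen, h, mul_zero]
    have h1 : β - dist x u ≤ f x := by
      have ha := hUle x
      have hb : β ≤ U := min_le_left _ _
      have hcm : dist u x = dist x u := dist_comm _ _
      rw [hpx] at ha
      linarith
    have h2 : f x ≤ α + dist x v := by
      have ha := hαge x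
      have hcm : dist v x = dist x v := dist_comm _ _
      rw [hpx] at ha
      linarith
    have hg0x : g0 x = f x := by
      show min (max (f x) (β - dist x u)) (α + dist x v) = f x
      rw [max_eq_left h1, min_eq_left h2]
    show max (f x - η x) (min (g0 x) (f x + η x)) = f x
    rw [hg0x, min_eq_left (by linarith [hη0 x]), max_eq_right (by linarith [hη0 x])]
  have houter : ∀ x, Q ≤ dist x z → g x = f x := by
    intro x hx
    have hηx : η x = 0 := by
      have h : max (Q - dist x z) 0 = 0 := max_eq_right (by linarith)
      simp only [hη, h, mul_zero]
    show max (f x - η x) (min (g0 x) (f x + η x)) = f x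
    rw [hηx, sub_zero, add_zero]
    exact max_eq_left (min_le_right _ _)
  have hgz : g z = 0 := by
    rw [hinner z (by rw [dist_self]; exact hP), hfz]
  -- Lipschitz
  have l1 : LipschitzWith 1 (fun x : M => β - dist x u) := by
    apply LipschitzWith.of_dist_le_mul
    intro x y
    rw [Real.dist_eq, NNReal.coe_one, one_mul]
    have he : β - dist x u - (β - dist y u) = -(dist x u - dist y u) := by ring
    rw [he, abs_neg]
    exact abs_dist_sub_le x y u
  have l2 : LipschitzWith 1 (fun x : M => α + dist x v) := by
    apply LipschitzWith.of_dist_le_mul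
    intro x y
    rw [Real.dist_eq, NNReal.coe_one, one_mul]
    have he : α + dist x v - (α + dist y v) = dist x v - dist y v := by ring
    rw [he]
    exact abs_dist_sub_le x y v
  have hg0lip : LipschitzWith 1 g0 := by
    have h := (hf.max l1).min l2
    simpa using h
  have hηlip : LipschitzWith δ.toNNReal η := by
    have l3 : LipschitzWith 1 (fun x : M => max (Q - dist x z) 0) := by
      apply LipschitzWith.of_dist_le_mul
      intro x y
      rw [Real.dist_eq, NNReal.coe_one, one_mul]
      refine le_trans (abs_max_sub_max_le_abs _ _ _) ?_
      have he : Q - dist x z - (Q - dist y z) = -(dist x z - dist y z) := by ring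
      rw [he, abs_neg]
      exact abs_dist_sub_le x y z
    apply LipschitzWith.of_dist_le_mul
    intro x y
    have h := l3.dist_le_mul x y
    rw [Real.dist_eq, NNReal.coe_one, one_mul] at h
    rw [Real.dist_eq]
    have he : η x - η y = δ * ((max (Q - dist x z) 0) - (max (Q - dist y z) 0)) := by
      simp only [hη]; ring
    rw [he, abs_mul, abs_of_nonneg hδ0.le, Real.coe_toNNReal _ hδ0.le]
    exact mul_le_mul_of_nonneg_left h hδ0.le
  have hglip : LipschitzWith (1 + δ.toNNReal) g := by
    have la : LipschitzWith (1 + δ.toNNReal) (fun x => f x - η x) := hf.sub hηlip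
    have lb : LipschitzWith (1 + δ.toNNReal) (fun x => f x + η x) := hf.add hηlip
    have lc := (hg0lip.min lb).weaken (le_of_eq (max_eq_right (le_add_of_nonneg_right zero_le)))
    have ld := (la.max lc).weaken (le_of_eq (max_self _))
    exact ld
  refine ⟨g, Q, hPQ, hglip, hgz, hinner, houter, ?_⟩
  rw [hgu, hgv]
  exact hβα

end AuxStatement12

set_option maxHeartbeats 1000000

/-- Proposition 4.4. Let `(m_{u_iv_i})` be a sequence of molecules such
that at least one of the sequences `(u_i)` and `(v_i)` is unbounded. Then
`limsup_i ‖F + m_{u_iv_i}‖ = 2` for every `F ∈ S_{Lip₀(M)*}`. -/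
theorem statement12 {M : Type*} [MetricSpace M] (z : M)
    (u v : ℕ → M) (huv : ∀ i, u i ≠ v i)
    (hub : ¬ Bornology.IsBounded (Set.range u) ∨ ¬ Bornology.IsBounded (Set.range v))
    (F : Dual ℝ ↥(Lip0 M z)) (hF : ‖F‖ = 1) :
    limsup (fun i => ‖F + molecule M z (u i) (v i)‖) atTop = 2 := by
  classical
  set S : ℕ → ℝ := fun i => ‖F + molecule M z (u i) (v i)‖ with hS
  -- basic facts about Lip0 and molecules
  have coe_lip : ∀ (G : ↥(Lip0 M z)) (K : ℝ≥0), ‖G‖ ≤ (K : ℝ) →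
      LipschitzWith K (G : M → ℝ) := by
    intro G K hK
    have h1 : lipConst (G : M → ℝ) ≤ K := by
      rw [Lip0.norm_def] at hK
      exact_mod_cast hK
    exact (Lip0.lipschitzWith G).weaken h1
  have norm_le_of_lip : ∀ (G : ↥(Lip0 M z)) (K : ℝ≥0), LipschitzWith K (G : M → ℝ) →
      ‖G‖ ≤ (K : ℝ) := by
    intro G K hK
    rw [Lip0.norm_def]
    exact_mod_cast lipConst_le hK
  have molecule_apply : ∀ (x y : M) (G : ↥(Lip0 M z)),
      molecule M z x y G = (dist x y)⁻¹ * ((G : M → ℝ) x - (G : M → ℝ) y) := by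
    intro x y G
    simp only [molecule, ContinuousLinearMap.smul_apply, ContinuousLinearMap.sub_apply,
      smul_eq_mul]
    rfl
  have hGdiff : ∀ (G : ↥(Lip0 M z)) (x y : M),
      |(G : M → ℝ) x - (G : M → ℝ) y| ≤ ‖G‖ * dist x y := by
    intro G x y
    have h := (Lip0.lipschitzWith G).dist_le_mul x y
    rw [Real.dist_eq] at h
    rw [Lip0.norm_def]
    exact h
  have hmol_norm : ∀ i, ‖molecule M z (u i) (v i)‖ ≤ 1 := by
    intro i
    refine ContinuousLinearMap.opNorm_le_bound _ zero_le_one fun G => ?_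
    rw [molecule_apply, one_mul]
    have hd : 0 < dist (u i) (v i) := dist_pos.mpr (huv i)
    rw [Real.norm_eq_abs, abs_mul, abs_of_nonneg (inv_nonneg.mpr hd.le)]
    rw [inv_mul_le_iff₀ hd]
    calc |(G : M → ℝ) (u i) - (G : M → ℝ) (v i)| ≤ ‖G‖ * dist (u i) (v i) :=
          hGdiff G (u i) (v i)
    _ = dist (u i) (v i) * ‖G‖ := by ring
  have hSle : ∀ i, S i ≤ 2 := by
    intro i
    calc S i ≤ ‖F‖ + ‖molecule M z (u i) (v i)‖ := norm_add_le _ _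
    _ ≤ 1 + 1 := by rw [hF]; linarith [hmol_norm i]
    _ = 2 := by norm_num
  -- unboundedness
  have hub2 : ∀ (R : ℝ) (N : ℕ), ∃ i, N ≤ i ∧ R ≤ max (dist (u i) z) (dist (v i) z) := by
    intro R N
    by_contra hcon
    push_neg at hcon
    have hbdd : ∀ (w' : ℕ → M), (∀ i, N ≤ i → dist (w' i) z < R) →
        Bornology.IsBounded (Set.range w') := by
      intro w' hw'
      set C := (∑ j ∈ Finset.range N, dist (w' j) z) + |R| with hC
      apply (Metric.isBounded_closedBall (x := z) (r := C)).subset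
      rintro x ⟨i, rfl⟩
      rw [Metric.mem_closedBall]
      rcases lt_or_ge i N with h | h
      · have h1 : dist (w' i) z ≤ ∑ j ∈ Finset.range N, dist (w' j) z :=
          Finset.single_le_sum (fun j _ => dist_nonneg) (Finset.mem_range.mpr h)
        have h2 : (0:ℝ) ≤ |R| := abs_nonneg R
        rw [hC]; linarith
      · have h1 := hw' i h
        have h2 : (0:ℝ) ≤ ∑ j ∈ Finset.range N, dist (w' j) z :=
          Finset.sum_nonneg fun j _ => dist_nonneg
        rw [hC]; linarith [le_abs_self R]
    rcases hub with h | h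
    · exact h (hbdd u fun i hi => lt_of_le_of_lt (le_max_left _ _) (hcon i hi))
    · exact h (hbdd v fun i hi => lt_of_le_of_lt (le_max_right _ _) (hcon i hi))
  -- the main estimate
  have main : ∀ ε : ℝ, 0 < ε → ∀ N : ℕ, ∃ i, N ≤ i ∧ 2 - ε ≤ S i := by
    intro ε hε N
    set δ := min (ε/5) (1/2) with hδdef
    have hδ0 : 0 < δ := lt_min (by linarith) (by norm_num)
    have hδ1 : δ ≤ 1 := le_trans (min_le_right _ _) (by norm_num)
    have hδε : 5 * δ ≤ ε := by
      have h := min_le_left (ε/5) (1/2)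
      rw [← hδdef] at h
      linarith
    have hδcoe : ((δ.toNNReal : ℝ)) = δ := Real.coe_toNNReal _ hδ0.le
    -- norming element
    obtain ⟨f₀, hf₀n, hf₀F⟩ := DeltaPaperNorming F (c := 1 - δ) (by linarith) (by rw [hF]; linarith)
    set f : M → ℝ := (f₀ : M → ℝ) with hfdef
    have hflip : LipschitzWith 1 f := coe_lip f₀ 1 (by rw [NNReal.coe_one]; exact hf₀n)
    have hfz : f z = 0 := f₀.2.2
    -- recursive construction
    have step' : ∀ PP : {p : ℝ // 0 ≤ p}, ∃ (next : {p : ℝ // 0 ≤ p}) (i : ℕ) (g : M → ℝ),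
        N ≤ i ∧ PP.1 ≤ next.1 ∧ LipschitzWith (1 + δ.toNNReal) g ∧ g z = 0 ∧
        (∀ x, dist x z ≤ PP.1 → g x = f x) ∧ (∀ x, next.1 ≤ dist x z → g x = f x) ∧
        (1 - δ) * dist (u i) (v i) ≤ g (u i) - g (v i) := by
      rintro ⟨P, hP⟩
      obtain ⟨i, hiN, hiR⟩ := hub2 (4*P + 4*P/δ + 1) N
      obtain ⟨g, Q, h1, h2, h3, h4, h5, h6⟩ :=
        DeltaPaperKey hflip hfz hP hδ0 hδ1 (huv i) hiR
      exact ⟨⟨Q, le_trans hP h1⟩, i, g, hiN, h1, h2, h3, h4, h5, h6⟩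
    choose nxt idxf gf hidxN hQle hLip hgz0 hin hout hval using step'
    set C : ℕ → {p : ℝ // 0 ≤ p} := fun l => nxt^[l] ⟨0, le_refl 0⟩ with hC
    have hCsucc : ∀ l, C (l+1) = nxt (C l) := by
      intro l
      rw [hC]
      exact Function.iterate_succ_apply' nxt l _
    have hmono : Monotone fun l => (C l).1 := by
      apply monotone_nat_of_le_succ
      intro l
      rw [hCsucc]
      exact hQle (C l)
    set w : ℕ → M → ℝ := fun l x => gf (C l) x - f x with hw
    have hw_supp : ∀ l x, w l x ≠ 0 → (C l).1 < dist x z ∧ dist x z < (C (l+1)).1 := by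
      intro l x hx
      constructor
      · by_contra h
        push_neg at h
        exact hx (by rw [hw]; simp only; rw [hin (C l) x h, sub_self])
      · by_contra h
        push_neg at h
        rw [hCsucc] at h
        exact hx (by rw [hw]; simp only; rw [hout (C l) x h, sub_self])
    have huniq : ∀ x l m, w l x ≠ 0 → w m x ≠ 0 → l = m := by
      intro x l m hl hm
      by_contra hne
      rcases Nat.lt_or_ge l m with hlt | hge
      · have h1 := (hw_supp l x hl).2
        have h2 := (hw_supp m x hm).1
        have h3 := hmono (show l+1 ≤ m from hlt)
        simp only at h3
        linarith
      · have hlt : m < l := lt_of_le_of_ne hge (fun h => hne h.symm)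
        have h1 := (hw_supp m x hm).2
        have h2 := (hw_supp l x hl).1
        have h3 := hmono (show m+1 ≤ l from hlt)
        simp only at h3
        linarith
    obtain ⟨n, hn⟩ : ∃ n : ℕ, 6 < n * δ := by
      obtain ⟨n, hn⟩ := exists_nat_gt (6/δ)
      refine ⟨n, ?_⟩
      rw [div_lt_iff₀ hδ0] at hn
      linarith
    have hn0 : 0 < n := by
      by_contra h
      push_neg at h
      interval_cases n
      simp at hn
      linarith
    -- Lipschitz bounds
    have hwlip3 : ∀ l x y, |w l x - w l y| ≤ 3 * dist x y := by
      intro l x y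
      have h1 : |gf (C l) x - gf (C l) y| ≤ (1 + δ) * dist x y := by
        have h := (hLip (C l)).dist_le_mul x y
        rw [Real.dist_eq, NNReal.coe_add, NNReal.coe_one, hδcoe] at h
        exact h
      have h2 : |f x - f y| ≤ dist x y := by
        have h := hflip.dist_le_mul x y
        rw [Real.dist_eq, NNReal.coe_one, one_mul] at h
        exact h
      have he : w l x - w l y = (gf (C l) x - gf (C l) y) - (f x - f y) := by
        simp only [hw]
        ring
      rw [he]
      calc |(gf (C l) x - gf (C l) y) - (f x - f y)|
          ≤ |gf (C l) x - gf (C l) y| + |f x - f y| := abs_sub _ _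
      _ ≤ (1 + δ) * dist x y + dist x y := by linarith
      _ ≤ 3 * dist x y := by nlinarith [dist_nonneg (x := x) (y := y)]
    set W : M → ℝ := fun x => ∑ l ∈ Finset.range n, w l x with hW
    have hWlip : ∀ x y, |W x - W y| ≤ 6 * dist x y := by
      intro x y
      set Sx := (Finset.range n).filter (fun l => w l x ≠ 0) with hSx
      set Sy := (Finset.range n).filter (fun l => w l y ≠ 0) with hSy
      have e1 : W x - W y = ∑ l ∈ Sx ∪ Sy, (w l x - w l y) := by
        rw [hW, ← Finset.sum_sub_distrib]
        refine (Finset.sum_subset (Finset.union_subset (Finset.filter_subset _ _)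
          (Finset.filter_subset _ _)) ?_).symm
        intro l hl hlnot
        rw [Finset.mem_union] at hlnot
        push_neg at hlnot
        have hx0 : w l x = 0 := by
          by_contra h
          exact hlnot.1 (Finset.mem_filter.mpr ⟨hl, h⟩)
        have hy0 : w l y = 0 := by
          by_contra h
          exact hlnot.2 (Finset.mem_filter.mpr ⟨hl, h⟩)
        rw [hx0, hy0, sub_self]
      have hcx : Sx.card ≤ 1 := by
        rw [Finset.card_le_one]
        intro a ha b hb
        exact huniq x a b (Finset.mem_filter.mp ha).2 (Finset.mem_filter.mp hb).2
      have hcy : Sy.card ≤ 1 := by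
        rw [Finset.card_le_one]
        intro a ha b hb
        exact huniq y a b (Finset.mem_filter.mp ha).2 (Finset.mem_filter.mp hb).2
      have hcard : ((Sx ∪ Sy).card : ℝ) ≤ 2 := by
        have h1 := Finset.card_union_le Sx Sy
        have h2 : (Sx ∪ Sy).card ≤ 2 := le_trans h1 (by omega)
        exact_mod_cast h2
      calc |W x - W y| = |∑ l ∈ Sx ∪ Sy, (w l x - w l y)| := by rw [e1]
      _ ≤ ∑ l ∈ Sx ∪ Sy, |w l x - w l y| := Finset.abs_sum_le_sum_abs _ _
      _ ≤ ∑ _l ∈ Sx ∪ Sy, 3 * dist x y := Finset.sum_le_sum fun l _ => hwlip3 l x y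
      _ = ((Sx ∪ Sy).card : ℝ) * (3 * dist x y) := by rw [Finset.sum_const, nsmul_eq_mul]
      _ ≤ 2 * (3 * dist x y) := by
          have hd : (0:ℝ) ≤ 3 * dist x y := by positivity
          exact mul_le_mul_of_nonneg_right hcard hd
      _ = 6 * dist x y := by ring
    -- elements of Lip0
    have hwlipW : ∀ l, LipschitzWith 3 (w l) := by
      intro l
      apply LipschitzWith.of_dist_le_mul
      intro x y
      rw [Real.dist_eq]
      have h := hwlip3 l x y
      have h3 : ((3 : ℝ≥0) : ℝ) = 3 := by norm_num
      rw [h3]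
      exact h
    have hwz : ∀ l, w l z = 0 := by
      intro l
      rw [hw]
      simp only
      rw [hgz0 (C l), hfz, sub_self]
    set w₀ : ℕ → ↥(Lip0 M z) := fun l => ⟨w l, ⟨3, hwlipW l⟩, hwz l⟩ with hw₀
    have hWlip' : LipschitzWith 6 W := by
      apply LipschitzWith.of_dist_le_mul
      intro x y
      rw [Real.dist_eq]
      have h6 : ((6 : ℝ≥0) : ℝ) = 6 := by norm_num
      rw [h6]
      exact hWlip x y
    set W₀ : ↥(Lip0 M z) := ⟨W, ⟨6, hWlip'⟩, by
      rw [hW]; simp only; exact Finset.sum_eq_zero fun l _ => hwz l⟩ with hW₀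
    have hWsum : W₀ = ∑ l ∈ Finset.range n, w₀ l := by
      apply Subtype.ext
      rw [AddSubmonoidClass.coe_finset_sum]
      funext x
      rw [Finset.sum_apply]
    have hWnorm : ‖W₀‖ ≤ 6 := by
      have h := norm_le_of_lip W₀ 6 hWlip'
      have h6 : ((6 : ℝ≥0) : ℝ) = 6 := by norm_num
      rwa [h6] at h
    have hFW : -6 ≤ F W₀ := by
      have h1 := ContinuousLinearMap.le_opNorm F W₀
      rw [hF, one_mul, Real.norm_eq_abs] at h1
      have h2 := (abs_le.mp (le_trans h1 hWnorm)).1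
      linarith
    -- pigeonhole
    have hpig : ∃ l, l < n ∧ -δ ≤ F (w₀ l) := by
      by_contra hcon
      push_neg at hcon
      have hlt : F W₀ < -6 := by
        rw [hWsum, map_sum]
        have h1 : ∑ l ∈ Finset.range n, F (w₀ l) < ∑ _l ∈ Finset.range n, (-δ) :=
          Finset.sum_lt_sum_of_nonempty (Finset.nonempty_range_iff.mpr hn0.ne')
            fun l hl => hcon l (Finset.mem_range.mp hl)
        rw [Finset.sum_const, Finset.card_range, nsmul_eq_mul] at h1
        nlinarith
      linarith
    obtain ⟨l, hln, hFwl⟩ := hpig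
    -- conclusion
    refine ⟨idxf (C l), hidxN (C l), ?_⟩
    set i := idxf (C l) with hi
    set G : ↥(Lip0 M z) := f₀ + w₀ l with hG
    have hGcoe : (G : M → ℝ) = gf (C l) := by
      rw [hG]
      rw [Submodule.coe_add]
      funext x
      show f x + w l x = gf (C l) x
      simp only [hw]
      ring
    have hGnorm : ‖G‖ ≤ 1 + δ := by
      have h1 : LipschitzWith (1 + δ.toNNReal) (G : M → ℝ) := by
        rw [hGcoe]; exact hLip (C l)
      have h2 := norm_le_of_lip G (1 + δ.toNNReal) h1
      rwa [NNReal.coe_add, NNReal.coe_one, hδcoe] at h2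
    have hFG : 1 - 2*δ ≤ F G := by
      rw [hG, map_add]
      linarith
    have hrpos : 0 < dist (u i) (v i) := dist_pos.mpr (huv i)
    have hmolG : 1 - δ ≤ molecule M z (u i) (v i) G := by
      rw [molecule_apply, hGcoe]
      rw [inv_mul_eq_div, le_div_iff₀ hrpos]
      exact hval (C l)
    have hpair : 2 - 3*δ ≤ (F + molecule M z (u i) (v i)) G := by
      have he : (F + molecule M z (u i) (v i)) G = F G + molecule M z (u i) (v i) G := rfl
      rw [he]
      linarith
    have hKup : (F + molecule M z (u i) (v i)) G ≤ S i * (1 + δ) := by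
      calc (F + molecule M z (u i) (v i)) G
          ≤ ‖(F + molecule M z (u i) (v i)) G‖ :=
            le_trans (le_abs_self _) (le_of_eq (Real.norm_eq_abs _).symm)
      _ ≤ ‖F + molecule M z (u i) (v i)‖ * ‖G‖ := ContinuousLinearMap.le_opNorm _ _
      _ ≤ S i * (1 + δ) := mul_le_mul_of_nonneg_left hGnorm (norm_nonneg _)
    have hS1 : 2 - 3*δ ≤ S i * (1 + δ) := le_trans hpair hKup
    by_contra hcon2
    push_neg at hcon2
    have hS2 : S i * (1 + δ) < (2 - ε) * (1 + δ) := by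
      have : (0:ℝ) < 1 + δ := by linarith
      exact mul_lt_mul_of_pos_right hcon2 this
    nlinarith [mul_pos hε hδ0]
  -- limsup computation
  have hBU : IsBoundedUnder (· ≤ ·) atTop S :=
    ⟨2, eventually_map.mpr (Filter.Eventually.of_forall hSle)⟩
  have hCB : IsCoboundedUnder (· ≤ ·) atTop S :=
    IsBoundedUnder.isCoboundedUnder_le
      ⟨0, eventually_map.mpr (Filter.Eventually.of_forall
        (fun i => norm_nonneg (F + molecule M z (u i) (v i))))⟩
  have h1 : limsup S atTop ≤ 2 := limsup_le_of_le hCB (Filter.Eventually.of_forall hSle)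
  have h2 : 2 ≤ limsup S atTop := by
    refine le_of_forall_pos_le_add fun ε hε => ?_
    have h3 : 2 - ε ≤ limsup S atTop := by
      refine le_limsup_of_frequently_le ?_ hBU
      rw [frequently_atTop]
      intro N
      obtain ⟨i, hi1, hi2⟩ := main ε hε N
      exact ⟨i, hi1, hi2⟩
    linarith
  exact le_antisymm h1 h2
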